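/- Let V=(d,Q,Δ) be a VASS and let s(v) and t(w) be configurations in Q×ℕ^d. Then s(v)⇝*t(w'') for some w''≥w (componentwise) if and only if there is a permutation σ of {1,…,d} and there are ℤ-configurations p_d(v_d),…,p_1(v_1), t(w') such that (1) s(v)→ℤ*p_d(v_d)→ℤ*p_{d-1}(v_{d-1})→ℤ*⋯→ℤ*p_1(v_1)→ℤ*t(w'), and (2) for each j∈{1,…,d}, w'[j]+|min(v_{σ^{-1}(j)}[j],0)| ≥ w[j]. -/

import Mathlib

/-- A transition of a `d`-dimensional VASS over state set `Q`:
a source state, an update vector in `ℤ^d`, and a target state. -/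
abbrev VTrans (d : ℕ) (Q : Type*) := Q × (Fin d → ℤ) × Q

/-- A vector addition system with states (VASS), given by its set of transitions. -/
structure VASS (d : ℕ) (Q : Type*) where
  Δ : Set (VTrans d Q)

variable {d : ℕ} {Q : Type*}

/-- A sequence of transitions is a path if consecutive states match. -/
def IsPath (ρ : List (VTrans d Q)) : Prop := ρ.Chain' (fun t t' => t.2.2 = t'.1)

/-- A path of the VASS `V`. -/
def PathIn (V : VASS d Q) (ρ : List (VTrans d Q)) : Prop :=
  IsPath ρ ∧ ∀ t ∈ ρ, t ∈ V.Δ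

/-- The path starts at state `s` (any state works for the empty path). -/
def FromState (s : Q) (ρ : List (VTrans d Q)) : Prop :=
  match ρ with
  | [] => True
  | t :: _ => t.1 = s

/-- The last state of the run induced by `ρ` from state `s`. -/
def endState (s : Q) (ρ : List (VTrans d Q)) : Q := (ρ.map (fun t => t.2.2)).getLastD s

/-- Cast a vector over `ℕ` to a vector over `ℤ`. -/
def ofNatVec (v : Fin d → ℕ) : Fin d → ℤ := fun j => (v j : ℤ)

/-- The `i`-th vector of the ℤ-run induced by the path `ρ` from initial vector `v`. -/
def zrun (v : Fin d → ℤ) (ρ : List (VTrans d Q)) (i : ℕ) : Fin d → ℤ :=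
  v + ((ρ.take i).map (fun t => t.2.1)).sum

/-- The last vector of the ℤ-run induced by `ρ` from `v`. -/
def zend (v : Fin d → ℤ) (ρ : List (VTrans d Q)) : Fin d → ℤ := zrun v ρ ρ.length

/-- One step of the monus semantics: add `z` and truncate at `0` componentwise. -/
def mstep (v : Fin d → ℕ) (z : Fin d → ℤ) : Fin d → ℕ := fun j => ((v j : ℤ) + z j).toNat

/-- The `i`-th vector of the monus run induced by the path `ρ` from initial vector `v`. -/
def mrun (v : Fin d → ℕ) (ρ : List (VTrans d Q)) (i : ℕ) : Fin d → ℕ :=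
  (ρ.take i).foldl (fun u t => mstep u t.2.1) v

/-- The last vector of the monus run induced by `ρ` from `v`. -/
def mend (v : Fin d → ℕ) (ρ : List (VTrans d Q)) : Fin d → ℕ := mrun v ρ ρ.length

/-- The classical run induced by `ρ` from `v` exists: no value of the ℤ-run
drops below zero in any coordinate. -/
def ClassicalOK (v : Fin d → ℕ) (ρ : List (VTrans d Q)) : Prop :=
  ∀ i ≤ ρ.length, ∀ j, 0 ≤ zrun (ofNatVec v) ρ i j

/-- Classical reachability `s(v) →* t(w)`. -/
def ClassicalReach (V : VASS d Q) (s : Q) (v : Fin d → ℕ) (t : Q) (w : Fin d → ℕ) : Prop :=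
  ∃ ρ, PathIn V ρ ∧ FromState s ρ ∧ endState s ρ = t ∧ ClassicalOK v ρ ∧
    zend (ofNatVec v) ρ = ofNatVec w

/-- Reachability in ℤ-semantics `s(v) →ℤ* t(w)`. -/
def ZReach (V : VASS d Q) (s : Q) (v : Fin d → ℤ) (t : Q) (w : Fin d → ℤ) : Prop :=
  ∃ ρ, PathIn V ρ ∧ FromState s ρ ∧ endState s ρ = t ∧ zend v ρ = w

/-- Reachability in monus semantics `s(v) ⇝* t(w)`. -/
def MonusReach (V : VASS d Q) (s : Q) (v : Fin d → ℕ) (t : Q) (w : Fin d → ℕ) : Prop :=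
  ∃ ρ, PathIn V ρ ∧ FromState s ρ ∧ endState s ρ = t ∧ mend v ρ = w

/-- Coordinate `j` hits `0` in the ℤ-run (equivalently, classical run) induced
by `ρ` from `v` (at some index `1 ≤ i ≤ k`). -/
def HitsZeroZ (v : Fin d → ℤ) (ρ : List (VTrans d Q)) (j : Fin d) : Prop :=
  ∃ i, 1 ≤ i ∧ i ≤ ρ.length ∧ zrun v ρ i j = 0

/-- Coordinate `j` hits `0` in the monus run induced by `ρ` from `v`. -/
def HitsZeroM (v : Fin d → ℕ) (ρ : List (VTrans d Q)) (j : Fin d) : Prop :=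
  ∃ i, 1 ≤ i ∧ i ≤ ρ.length ∧ mrun v ρ i j = 0

/-- The monus run induced by `ρ` from `v` is lossy: at some step, for some
coordinate, the actual change differs from the transition's update. -/
def Lossy (v : Fin d → ℕ) (ρ : List (VTrans d Q)) : Prop :=
  ∃ (i : Fin ρ.length) (j : Fin d),
    (mrun v ρ ((i : ℕ) + 1) j : ℤ) ≠ (mrun v ρ (i : ℕ) j : ℤ) + (ρ.get i).2.1 j

/-- `mi ρ s₀ v₀`: the coordinatewise minimum (with `0`) of all values along
the ℤ-run induced by `ρ` from `v`. -/
def mi (v : Fin d → ℤ) (ρ : List (VTrans d Q)) : Fin d → ℤ :=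
  fun j => min 0 ((Finset.range (ρ.length + 1)).inf' Finset.nonempty_range_add_one
    (fun i => zrun v ρ i j))

/-- The reverse VASS: `(p,z,q)` is a transition iff `(q,-z,p)` is one of `V`. -/
def revV (V : VASS d Q) : VASS d Q := ⟨{tr | (tr.2.2, -tr.2.1, tr.1) ∈ V.Δ}⟩

/-- Coverability in monus semantics. -/
def MonusCover (V : VASS d Q) (s : Q) (v : Fin d → ℕ) (t : Q) (w : Fin d → ℕ) : Prop :=
  ∃ w', w ≤ w' ∧ MonusReach V s v t w'

/-- Coverability in classical semantics. -/
def ClassicalCover (V : VASS d Q) (s : Q) (v : Fin d → ℕ) (t : Q) (w : Fin d → ℕ) : Prop :=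
  ∃ w', w ≤ w' ∧ ClassicalReach V s v t w'

/-! ### Auxiliary lemmas -/

section Aux

lemma getLastD_append' {α : Type*} (a b : List α) (c : α) :
    (a ++ b).getLastD c = b.getLastD (a.getLastD c) := by
  rcases b.eq_nil_or_concat with rfl | ⟨b', x, rfl⟩
  · simp
  · rw [List.concat_eq_append, ← List.append_assoc]
    simp [List.getLastD_concat]

@[simp] lemma zrun_zero (v : Fin d → ℤ) (ρ : List (VTrans d Q)) : zrun v ρ 0 = v := by
  simp [zrun]

lemma zrun_of_length_le (v : Fin d → ℤ) (ρ : List (VTrans d Q)) {k : ℕ}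
    (hk : ρ.length ≤ k) : zrun v ρ k = zend v ρ := by
  unfold zend
  unfold zrun
  rw [List.take_of_length_le hk, List.take_length]

lemma zrun_succ (v : Fin d → ℤ) (ρ : List (VTrans d Q)) (k : ℕ) (hk : k < ρ.length) :
    zrun v ρ (k + 1) = zrun v ρ k + (ρ.get ⟨k, hk⟩).2.1 := by
  unfold zrun
  rw [List.take_succ, List.map_append, List.sum_append]
  simp [List.getElem?_eq_getElem hk, add_assoc]

lemma mrun_succ (v : Fin d → ℕ) (ρ : List (VTrans d Q)) (k : ℕ) (hk : k < ρ.length) :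
    mrun v ρ (k + 1) = mstep (mrun v ρ k) (ρ.get ⟨k, hk⟩).2.1 := by
  unfold mrun
  rw [List.take_succ, List.foldl_append]
  simp [List.getElem?_eq_getElem hk]

/-- The key relation between the monus run and the ℤ-run. -/
lemma mrun_eq_zrun_sub_min (v : Fin d → ℕ) (ρ : List (VTrans d Q)) (k : ℕ)
    (hk : k ≤ ρ.length) (j : Fin d) :
    (mrun v ρ k j : ℤ) = zrun (ofNatVec v) ρ k j -
      min 0 ((Finset.range (k + 1)).inf' Finset.nonempty_range_add_one
        (fun i => zrun (ofNatVec v) ρ i j)) := by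
  induction k with
  | zero => simp [mrun, ofNatVec]
  | succ k ih =>
    have hk' : k < ρ.length := hk
    have ih' := ih (le_of_lt hk')
    have hIle : (Finset.range (k + 1)).inf' Finset.nonempty_range_add_one
        (fun i => zrun (ofNatVec v) ρ i j) ≤ zrun (ofNatVec v) ρ k j :=
      Finset.inf'_le _ (Finset.self_mem_range_succ k)
    have hins : (Finset.range (k + 1 + 1)).inf' Finset.nonempty_range_add_one
        (fun i => zrun (ofNatVec v) ρ i j)
        = min (zrun (ofNatVec v) ρ (k + 1) j)
          ((Finset.range (k + 1)).inf' Finset.nonempty_range_add_one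
            (fun i => zrun (ofNatVec v) ρ i j)) := by
      apply le_antisymm
      · apply le_min
        · exact Finset.inf'_le _ (by simp)
        · apply Finset.le_inf'
          intro b hb
          simp only [Finset.mem_range] at hb
          exact Finset.inf'_le _ (by simp; omega)
      · apply Finset.le_inf'
        intro b hb
        simp only [Finset.mem_range] at hb
        rcases Nat.lt_succ_iff_lt_or_eq.mp hb with h | rfl
        · exact le_trans (min_le_right _ _) (Finset.inf'_le _ (by simpa using h))
        · exact min_le_left _ _
    have hz := zrun_succ (ofNatVec v) ρ k hk'
    have hm := mrun_succ v ρ k hk'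
    rw [hm, hins]
    have hms : (mstep (mrun v ρ k) (ρ.get ⟨k, hk'⟩).2.1 j : ℤ)
        = max ((mrun v ρ k j : ℤ) + (ρ.get ⟨k, hk'⟩).2.1 j) 0 := by
      simp [mstep, Int.toNat_eq_max]
    have hzj : zrun (ofNatVec v) ρ (k + 1) j
        = zrun (ofNatVec v) ρ k j + (ρ.get ⟨k, hk'⟩).2.1 j := by
      rw [hz]; rfl
    rw [hms, hzj]
    omega

lemma endState_append (s : Q) (l₁ l₂ : List (VTrans d Q)) :
    endState s (l₁ ++ l₂) = endState (endState s l₁) l₂ := by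
  unfold endState
  rw [List.map_append, getLastD_append']

lemma endState_concat (s : Q) (l : List (VTrans d Q)) (t : VTrans d Q) :
    endState s (l ++ [t]) = t.2.2 := by
  unfold endState
  rw [List.map_append]
  simp [List.getLastD_concat]

lemma fromState_append {s : Q} {l₁ l₂ : List (VTrans d Q)}
    (h₁ : FromState s l₁) (h₂ : FromState (endState s l₁) l₂) :
    FromState s (l₁ ++ l₂) := by
  cases l₁ with
  | nil => simpa [endState] using h₂
  | cons t l => exact h₁

lemma isPath_append {s : Q} {l₁ l₂ : List (VTrans d Q)}
    (h₁ : IsPath l₁) (h₂ : IsPath l₂) (hf : FromState (endState s l₁) l₂) :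
    IsPath (l₁ ++ l₂) := by
  unfold IsPath at *
  apply List.isChain_append.mpr
  refine ⟨h₁, h₂, ?_⟩
  intro x hx y hy
  rcases l₁.eq_nil_or_concat with rfl | ⟨l', x', rfl⟩
  · simp at hx
  · rw [List.concat_eq_append] at *
    have hx' : x = x' := by
      have h := List.getLast?_concat (l := l') (a := x')
      rw [h] at hx
      exact (Option.some_inj.mp hx).symm
    cases l₂ with
    | nil => simp at hy
    | cons y' t =>
      have hy' : y = y' := by symm; simpa using hy
      have : y'.1 = endState s (l' ++ [x']) := hf
      rw [hx', hy', this, endState_concat]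

lemma zend_eq (u : Fin d → ℤ) (l : List (VTrans d Q)) :
    zend u l = u + (l.map (fun t => t.2.1)).sum := by
  unfold zend zrun
  rw [List.take_length]

lemma zend_append (u : Fin d → ℤ) (l₁ l₂ : List (VTrans d Q)) :
    zend u (l₁ ++ l₂) = zend (zend u l₁) l₂ := by
  simp [zend_eq, add_assoc]

lemma zrun_append_of_le (u : Fin d → ℤ) (l₁ l₂ : List (VTrans d Q)) {a : ℕ}
    (ha : a ≤ l₁.length) : zrun u (l₁ ++ l₂) a = zrun u l₁ a := by
  unfold zrun
  rw [List.take_append_of_le_length ha]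

/-- Source of the `a`-th transition along a path equals the end state of the
prefix of length `a`. -/
lemma get_fst_eq_endState_take {s : Q} {ρ : List (VTrans d Q)}
    (hp : IsPath ρ) (hf : FromState s ρ) (a : ℕ) (ha : a < ρ.length) :
    (ρ.get ⟨a, ha⟩).1 = endState s (ρ.take a) := by
  cases a with
  | zero =>
    cases ρ with
    | nil => simp at ha
    | cons t l => simpa [endState, FromState] using hf
  | succ b =>
    have hb : b < ρ.length := by omega
    have htake : ρ.take (b + 1) = ρ.take b ++ [ρ.get ⟨b, hb⟩] := by
      rw [List.take_succ]
      simp [List.getElem?_eq_getElem hb]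
    rw [htake, endState_concat]
    have := List.isChain_iff_getElem.mp hp b (by omega)
    exact this.symm

end Aux

/-- (Characterization of monus coverability.)
`s(v) ⇝* t(w'')` for some `w'' ≥ w` iff there is a permutation `σ` of `{1,…,d}` and
ℤ-configurations `p_d(v_d), …, p_1(v_1), t(w')` such that
(1) `s(v) →ℤ* p_d(v_d) →ℤ* ⋯ →ℤ* p_1(v_1) →ℤ* t(w')`, and
(2) for each `j`, `w'[j] + |min(v_{σ⁻¹(j)}[j], 0)| ≥ w[j]`.
Here the chain of configurations is encoded as `g : Fin (d+2) → Q × (Fin d → ℤ)`,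
where `g 0 = (s, v)`, `g i` for `1 ≤ i ≤ d` is the configuration `p_{d+1-i}(v_{d+1-i})`,
and `g (d+1) = (t, w')`; the coordinate `j ∈ {1,…,d}` is represented by `j : Fin d`
(so the configuration `p_{σ⁻¹(j)}(v_{σ⁻¹(j)})` is `g (d - (σ⁻¹ j : ℕ))`). -/
theorem stmt11 {d : ℕ} {Q : Type*} (V : VASS d Q) (s t : Q) (v w : Fin d → ℕ) :
    (∃ w'' : Fin d → ℕ, w ≤ w'' ∧ MonusReach V s v t w'') ↔
    ∃ (σ : Equiv.Perm (Fin d)) (g : Fin (d + 2) → Q × (Fin d → ℤ)),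
      g 0 = (s, ofNatVec v) ∧ (g (Fin.last (d + 1))).1 = t ∧
      (∀ i : Fin (d + 1),
        ZReach V (g i.castSucc).1 (g i.castSucc).2 (g i.succ).1 (g i.succ).2) ∧
      (∀ j : Fin d, (w j : ℤ) ≤
        (g (Fin.last (d + 1))).2 j +
          |min ((g ⟨d - (σ.symm j : ℕ), by omega⟩).2 j) 0|) := by
  classical
  constructor
  · -- forward direction
    rintro ⟨w'', hw, ρ, hPathIn, hFrom, hEnd, hmend⟩
    set zr : ℕ → Fin d → ℤ := fun i => zrun (ofNatVec v) ρ i with hzr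
    have hargmin : ∀ j : Fin d, ∃ a, a ∈ Finset.range (ρ.length + 1) ∧
        (Finset.range (ρ.length + 1)).inf' Finset.nonempty_range_add_one
          (fun i => zrun (ofNatVec v) ρ i j) = zrun (ofNatVec v) ρ a j := fun j =>
      Finset.exists_mem_eq_inf' Finset.nonempty_range_add_one (fun i => zrun (ofNatVec v) ρ i j)
    choose m hm_mem hm_eq using hargmin
    have hm_le : ∀ j, m j ≤ ρ.length := fun j => by
      have := hm_mem j; rw [Finset.mem_range] at this; omega
    set τ : Equiv.Perm (Fin d) := Tuple.sort m with hτ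
    set M : ℕ → ℕ := fun k => if h : k < d then m (τ ⟨k, h⟩) else ρ.length with hM
    set r : Fin (d + 2) → ℕ := fun i =>
      if (i : ℕ) = 0 then 0 else M ((i : ℕ) - 1) with hr
    set g : Fin (d + 2) → Q × (Fin d → ℤ) := fun i =>
      (endState s (ρ.take (r i)), zrun (ofNatVec v) ρ (r i)) with hg
    have hM_le : ∀ k, M k ≤ ρ.length := by
      intro k; rw [hM]; dsimp only; split
      · exact hm_le _
      · exact le_rfl
    have hM_mono : ∀ k k', k ≤ k' → M k ≤ M k' := by
      intro k k' hkk; rw [hM]; dsimp only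
      by_cases h' : k' < d
      · have hk : k < d := by omega
        rw [dif_pos hk, dif_pos h']
        exact Tuple.monotone_sort m (show (⟨k, hk⟩ : Fin d) ≤ ⟨k', h'⟩ from hkk)
      · rw [dif_neg h']
        by_cases hk : k < d
        · rw [dif_pos hk]
          exact hm_le _
        · rw [dif_neg hk]
    have hr_le : ∀ i, r i ≤ ρ.length := by
      intro i; rw [hr]; dsimp only; split
      · exact Nat.zero_le _
      · exact hM_le _
    have hr_mono : ∀ i : Fin (d + 1), r i.castSucc ≤ r i.succ := by
      intro i
      rw [hr]; dsimp only
      rw [Fin.coe_castSucc, Fin.val_succ]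
      split
      · exact Nat.zero_le _
      · rw [if_neg (by omega)]
        exact hM_mono _ _ (by omega)
    have key : ∀ a b : ℕ, a ≤ b → b ≤ ρ.length →
        ZReach V (endState s (ρ.take a)) (zrun (ofNatVec v) ρ a)
          (endState s (ρ.take b)) (zrun (ofNatVec v) ρ b) := by
      intro a b hab hb
      have h1 : ρ.take a = (ρ.take b).take a := by
        rw [List.take_take, min_eq_left hab]
      have hdecomp : ρ.take b = ρ.take a ++ (ρ.take b).drop a := by
        conv_lhs => rw [← List.take_append_drop a (ρ.take b)]
        rw [← h1]
      refine ⟨(ρ.take b).drop a, ⟨?_, ?_⟩, ?_, ?_, ?_⟩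
      · exact List.IsChain.infix hPathIn.1
          (((ρ.take b).drop_suffix a).isInfix.trans (ρ.take_prefix b).isInfix)
      · intro tr htr
        exact hPathIn.2 _ (List.mem_of_mem_take (List.mem_of_mem_drop htr))
      · cases hseg : (ρ.take b).drop a with
        | nil => trivial
        | cons tr l =>
          have hlen : a < (ρ.take b).length := by
            by_contra hcon
            rw [List.drop_eq_nil_of_le (by omega)] at hseg
            cases hseg
          have ha' : a < ρ.length := by
            rw [List.length_take] at hlen; omega
          have hhead : ((ρ.take b).drop a).head? = some tr := by rw [hseg]; rfl
          rw [List.head?_drop] at hhead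
          have hab' : a < b := by
            rw [List.length_take] at hlen; omega
          rw [List.getElem?_take_of_lt hab', List.getElem?_eq_getElem ha'] at hhead
          have htr : tr = ρ.get ⟨a, ha'⟩ := (Option.some_inj.mp hhead).symm
          show tr.1 = _
          rw [htr]
          exact get_fst_eq_endState_take hPathIn.1 hFrom a ha'
      · conv_rhs => rw [hdecomp]
        rw [endState_append]
      · rw [zend_eq]
        unfold zrun
        conv_rhs => rw [hdecomp]
        rw [List.map_append, List.sum_append, ← add_assoc]
    refine ⟨(τ.symm.trans Fin.revPerm).symm, g, ?_, ?_, ?_, ?_⟩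
    · have hr0 : r 0 = 0 := by rw [hr]; simp
      rw [hg]; dsimp only
      rw [hr0]
      simp [endState]
    · have hrlast : r (Fin.last (d + 1)) = ρ.length := by
        rw [hr]; dsimp only
        rw [Fin.val_last, if_neg (by omega)]
        rw [hM]; dsimp only
        rw [dif_neg (by omega)]
      rw [hg]; dsimp only
      rw [hrlast, List.take_length, hEnd]
    · intro i
      rw [hg]; dsimp only
      exact key _ _ (hr_mono i) (hr_le _)
    · intro j
      set tj : Fin d := τ.symm j with htj
      have hσ : (((τ.symm.trans Fin.revPerm).symm).symm j : ℕ) = d - 1 - (tj : ℕ) := by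
        rw [Equiv.symm_symm, Equiv.trans_apply, Fin.revPerm_apply, Fin.val_rev]
        omega
      have htjlt : (tj : ℕ) < d := tj.isLt
      have hidx : d - (((τ.symm.trans Fin.revPerm).symm).symm j : ℕ) = (tj : ℕ) + 1 := by
        rw [hσ]; omega
      have hgidx : (g ⟨d - (((τ.symm.trans Fin.revPerm).symm).symm j : ℕ), by omega⟩).2
          = zrun (ofNatVec v) ρ (m j) := by
        rw [hg]; dsimp only
        rw [hr]; dsimp only
        simp only [hidx]
        rw [if_neg (by omega)]
        rw [hM]; dsimp only
        rw [dif_pos (by omega : (tj : ℕ) + 1 - 1 < d)]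
        have : (⟨(tj : ℕ) + 1 - 1, by omega⟩ : Fin d) = tj := Fin.ext (by simp)
        rw [this, htj, Equiv.apply_symm_apply]
      have hglast : (g (Fin.last (d + 1))).2 = zrun (ofNatVec v) ρ ρ.length := by
        rw [hg]; dsimp only
        rw [hr]; dsimp only
        rw [Fin.val_last, if_neg (by omega), hM]; dsimp only
        rw [dif_neg (by omega)]
      rw [hgidx, hglast]
      have hmm : (mrun v ρ ρ.length j : ℤ) = zrun (ofNatVec v) ρ ρ.length j -
          min 0 ((Finset.range (ρ.length + 1)).inf' Finset.nonempty_range_add_one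
            (fun i => zrun (ofNatVec v) ρ i j)) := mrun_eq_zrun_sub_min v ρ ρ.length le_rfl j
      rw [hm_eq j] at hmm
      have hwj : (w j : ℤ) ≤ (w'' j : ℤ) := Int.ofNat_le.mpr (hw j)
      have hmendj : mrun v ρ ρ.length j = w'' j := by
        rw [← hmend]; rfl
      rw [hmendj] at hmm
      rw [abs_of_nonpos (min_le_right _ _)]
      omega
  · -- backward direction
    rintro ⟨σ, g, hg0, hglast, hchain, hcond⟩
    have claim : ∀ n (hn : n < d + 2), ∃ π : List (VTrans d Q), PathIn V π ∧
        FromState s π ∧ endState s π = (g ⟨n, hn⟩).1 ∧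
        zend (ofNatVec v) π = (g ⟨n, hn⟩).2 ∧
        ∀ k (hk : k ≤ n), ∃ a, a ≤ π.length ∧
          zrun (ofNatVec v) π a = (g ⟨k, by omega⟩).2 := by
      intro n
      induction n with
      | zero =>
        intro hn
        refine ⟨[], ⟨List.isChain_nil, by simp⟩, trivial, ?_, ?_, ?_⟩
        · show s = _
          rw [show (⟨0, hn⟩ : Fin (d + 2)) = 0 from rfl, hg0]
        · show zrun (ofNatVec v) [] 0 = _
          rw [zrun_zero, show (⟨0, hn⟩ : Fin (d + 2)) = 0 from rfl, hg0]
        · intro k hk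
          have hk0 : k = 0 := by omega
          subst hk0
          refine ⟨0, le_rfl, ?_⟩
          rw [zrun_zero, show (⟨0, by omega⟩ : Fin (d + 2)) = 0 from rfl, hg0]
      | succ n ih =>
        intro hn
        obtain ⟨π, hPathIn, hFrom, hEnd, hZend, hPass⟩ := ih (by omega)
        have hchain' : ZReach V (g ⟨n, by omega⟩).1 (g ⟨n, by omega⟩).2
            (g ⟨n + 1, hn⟩).1 (g ⟨n + 1, hn⟩).2 := hchain ⟨n, by omega⟩
        obtain ⟨ρn, hPn, hFn, hEn, hZn⟩ := hchain'
        have hFn' : FromState (endState s π) ρn := by rw [hEnd]; exact hFn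
        refine ⟨π ++ ρn, ⟨isPath_append hPathIn.1 hPn.1 hFn', ?_⟩,
          fromState_append hFrom hFn', ?_, ?_, ?_⟩
        · intro tr htr
          rcases List.mem_append.mp htr with h | h
          · exact hPathIn.2 _ h
          · exact hPn.2 _ h
        · rw [endState_append, hEnd]
          exact hEn
        · rw [zend_append, hZend]
          exact hZn
        · intro k hk
          rcases Nat.lt_succ_iff_lt_or_eq.mp (Nat.lt_succ_of_le hk) with h | rfl
        
          · obtain ⟨a, ha, hza⟩ := hPass k (by omega)
            refine ⟨a, ?_, ?_⟩
            · rw [List.length_append]; omega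
            · rw [zrun_append_of_le _ _ _ ha]
              exact hza
          · refine ⟨(π ++ ρn).length, le_rfl, ?_⟩
            show zend (ofNatVec v) (π ++ ρn) = _
            rw [zend_append, hZend]
            exact hZn
    obtain ⟨π, hPathIn, hFrom, hEnd, hZend, hPass⟩ := claim (d + 1) (by omega)
    refine ⟨mend v π, ?_, π, hPathIn, hFrom, hEnd.trans hglast, rfl⟩
    intro j
    have hcj := hcond j
    obtain ⟨a, ha, hza⟩ := hPass (d - (σ.symm j : ℕ)) (by omega)
    have hmm : (mend v π j : ℤ) = zrun (ofNatVec v) π π.length j -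
        min 0 ((Finset.range (π.length + 1)).inf' Finset.nonempty_range_add_one
          (fun i => zrun (ofNatVec v) π i j)) := mrun_eq_zrun_sub_min v π π.length le_rfl j
    have hIle : (Finset.range (π.length + 1)).inf' Finset.nonempty_range_add_one
        (fun i => zrun (ofNatVec v) π i j) ≤ zrun (ofNatVec v) π a j :=
      Finset.inf'_le _ (Finset.mem_range.mpr (by omega))
    have hza' : zrun (ofNatVec v) π a j
        = (g ⟨d - (σ.symm j : ℕ), by omega⟩).2 j := congrFun hza j
    have hZend' : zrun (ofNatVec v) π π.length j = (g (Fin.last (d + 1))).2 j := by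
      have : zend (ofNatVec v) π j = (g (Fin.last (d + 1))).2 j := by
        rw [hZend]; rfl
      exact this
    rw [abs_of_nonpos (min_le_right _ _)] at hcj
    have : (w j : ℤ) ≤ (mend v π j : ℤ) := by
      rw [hmm, hZend']
      rw [hza'] at hIle
      omega
    exact_mod_cast this
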